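/- arXiv:2210.16165 — 2 statements merged into one kernel-verified Lean document; each statement's English description precedes it below -/
import Mathlib

section
/- There is no weight function w on Z_8 with w(0)=0 such that the map i ↦ (binary expansion based map) makes Z_8 with w isometric to Z_2^3 with the Hamming metric; concretely: there is no bijection φ : Z_8 → Z_2^3 and no function w : Z_8 → ℕ with w(x - y) = d_H(φ(x), φ(y)) for all x, y, where d_H is Hamming distance. -/
/-- The modular Gray map η^s_g : Z_{2^s} → Z_{2^{s-1}} × Z_{2^{s-1}}. -/
def etaG (s : ℕ) (u : ZMod (2^s)) : ZMod (2^(s-1)) × ZMod (2^(s-1)) :=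
  let i := u.val
  if i < 2^(s-2) then ((i : ZMod (2^(s-1))), (i : ZMod (2^(s-1))))
  else if i < 2^(s-1) then (((i - 2^(s-2) : ℕ) : ZMod (2^(s-1))), (i : ZMod (2^(s-1))))
  else if i < 2^(s-1) + 2^(s-2) then
    (((i - 2^(s-2) : ℕ) : ZMod (2^(s-1))), ((i - 2^(s-2) : ℕ) : ZMod (2^(s-1))))
  else (((i - 2^(s-1) : ℕ) : ZMod (2^(s-1))), ((i - 3 * 2^(s-2) : ℕ) : ZMod (2^(s-1))))

/-- The homogeneous weight on Z_{2^s}. -/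
def homWt (s : ℕ) (u : ZMod (2^s)) : ℕ :=
  if u = 0 then 0 else if u.val = 2^(s-1) then 2^(s-1) else 2^(s-2)

def Pw (v : Fin 3 → ZMod 2) : ZMod 2 := v 0 + v 1 + v 2

lemma parity_hd : ∀ a b : Fin 3 → ZMod 2, ((hammingDist a b : ℕ) : ZMod 2) = Pw a + Pw b := by
  decide

lemma card_S : ∀ a : Fin 3 → ZMod 2,
    (Finset.univ.filter (fun b => Pw b ≠ Pw a)).card = 4 := by decide

lemma sum_S : ∀ a : Fin 3 → ZMod 2,
    ∑ b ∈ Finset.univ.filter (fun b => Pw b ≠ Pw a), hammingDist b a = 6 := by decide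

theorem no_isometry_Z8_Hamming :
    ¬ ∃ (φ : ZMod 8 → (Fin 3 → ZMod 2)) (w : ZMod 8 → ℕ),
      Function.Bijective φ ∧ ∀ x y : ZMod 8, w (x - y) = hammingDist (φ x) (φ y) := by
  rintro ⟨φ, w, ⟨hinj, hsurj⟩, h⟩
  have hw : ∀ x : ZMod 8, w x = hammingDist (φ x) (φ 0) := fun x => by
    simpa using h x 0
  have hpar : ∀ x y : ZMod 8, ((w (x - y) : ℕ) : ZMod 2) = Pw (φ x) + Pw (φ y) := fun x y => by
    rw [h x y]; exact parity_hd _ _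
  -- consecutive step parity
  have step : ∀ x : ZMod 8, Pw (φ (x + 1)) + Pw (φ x) = ((w 1 : ℕ) : ZMod 2) := by
    intro x
    have := hpar (x + 1) x
    simpa using this.symm
  rcases (by decide : ∀ c : ZMod 2, c = 0 ∨ c = 1) ((w 1 : ℕ) : ZMod 2) with hc | hc
  · -- even case: Pw ∘ φ is constant, contradicting surjectivity
    have stepe : ∀ x : ZMod 8, Pw (φ (x + 1)) = Pw (φ x) := by
      intro x
      have := step x
      rw [hc] at this
      have h2 : ∀ a b : ZMod 2, a + b = 0 → a = b := by decide
      exact h2 _ _ this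
    have const : ∀ n : ℕ, Pw (φ (n : ZMod 8)) = Pw (φ 0) := by
      intro n
      induction n with
      | zero => simp
      | succ k ih =>
        have := stepe (k : ZMod 8)
        rw [ih] at this
        simpa [Nat.cast_succ] using this
    have constz : ∀ x : ZMod 8, Pw (φ x) = Pw (φ 0) := by
      intro x
      have := const x.val
      rwa [ZMod.natCast_val, ZMod.cast_id] at this
    obtain ⟨a, ha⟩ := hsurj (fun _ => 1)
    obtain ⟨b, hb⟩ := hsurj (fun _ => 0)
    have h1 : Pw (φ a) = 1 := by rw [ha]; decide
    have h0 : Pw (φ b) = 0 := by rw [hb]; decide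
    rw [constz a] at h1; rw [constz b] at h0
    rw [h1] at h0
    exact one_ne_zero h0
  · -- odd case
    have stepo : ∀ x : ZMod 8, Pw (φ (x + 1)) = Pw (φ x) + 1 := by
      intro x
      have := step x
      rw [hc] at this
      have h2 : ∀ a b : ZMod 2, a + b = 1 → a = b + 1 := by decide
      exact h2 _ _ this
    -- compute Pw (φ k) for k = 1..7
    have p1 : Pw (φ 1) = Pw (φ 0) + 1 := by simpa using stepo 0
    have hch : ∀ c : ZMod 2, c + 1 + 1 = c := by decide
    have p2 : Pw (φ 2) = Pw (φ 0) := by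
      have := stepo 1; rw [p1, hch, show (1 : ZMod 8) + 1 = 2 by decide] at this; exact this
    have p3 : Pw (φ 3) = Pw (φ 0) + 1 := by
      have := stepo 2; rw [p2, show (2 : ZMod 8) + 1 = 3 by decide] at this; exact this
    have p4 : Pw (φ 4) = Pw (φ 0) := by
      have := stepo 3; rw [p3, hch, show (3 : ZMod 8) + 1 = 4 by decide] at this; exact this
    have p5 : Pw (φ 5) = Pw (φ 0) + 1 := by
      have := stepo 4; rw [p4, show (4 : ZMod 8) + 1 = 5 by decide] at this; exact this
    have p6 : Pw (φ 6) = Pw (φ 0) := by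
      have := stepo 5; rw [p5, hch, show (5 : ZMod 8) + 1 = 6 by decide] at this; exact this
    have p7 : Pw (φ 7) = Pw (φ 0) + 1 := by
      have := stepo 6; rw [p6, show (6 : ZMod 8) + 1 = 7 by decide] at this; exact this
    -- the four odd images are exactly the opposite parity class
    set S := Finset.univ.filter (fun b => Pw b ≠ Pw (φ 0)) with hS
    have hne : ∀ c : ZMod 2, c + 1 ≠ c := by decide
    have m1 : φ 1 ∈ S := by simp [hS, p1, hne]
    have m3 : φ 3 ∈ S := by simp [hS, p3, hne]
    have m5 : φ 5 ∈ S := by simp [hS, p5, hne]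
    have m7 : φ 7 ∈ S := by simp [hS, p7, hne]
    have d13 : φ 1 ≠ φ 3 := fun e => absurd (hinj e) (by decide)
    have d15 : φ 1 ≠ φ 5 := fun e => absurd (hinj e) (by decide)
    have d17 : φ 1 ≠ φ 7 := fun e => absurd (hinj e) (by decide)
    have d35 : φ 3 ≠ φ 5 := fun e => absurd (hinj e) (by decide)
    have d37 : φ 3 ≠ φ 7 := fun e => absurd (hinj e) (by decide)
    have d57 : φ 5 ≠ φ 7 := fun e => absurd (hinj e) (by decide)
    set T : Finset (Fin 3 → ZMod 2) := {φ 1, φ 3, φ 5, φ 7} with hT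
    have hTS : T ⊆ S := by
      intro b hb
      simp [hT] at hb
      rcases hb with rfl | rfl | rfl | rfl
      exacts [m1, m3, m5, m7]
    have hTcard : T.card = 4 := by
      rw [hT]
      rw [Finset.card_insert_of_notMem (by simp [d13, d15, d17]),
          Finset.card_insert_of_notMem (by simp [d35, d37]),
          Finset.card_insert_of_notMem (by simp [d57]), Finset.card_singleton]
    have hTeqS : T = S := Finset.eq_of_subset_of_card_le hTS (by rw [card_S (φ 0), hTcard])
    have hsum : ∑ b ∈ T, hammingDist b (φ 0) = 6 := by rw [hTeqS]; exact sum_S (φ 0)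
    have hsum' : w 1 + w 3 + w 5 + w 7 = 6 := by
      rw [hT] at hsum
      rw [Finset.sum_insert (by simp [d13, d15, d17]),
          Finset.sum_insert (by simp [d35, d37]),
          Finset.sum_insert (by simp [d57]), Finset.sum_singleton] at hsum
      rw [hw 1, hw 3, hw 5, hw 7]
      omega
    -- symmetry: w 7 = w 1, w 5 = w 3
    have w71 : w 1 = w 7 := by
      have h1 := h 0 7
      have h2 := h 7 0
      have e1 : (0 : ZMod 8) - 7 = 1 := by decide
      have e2 : (7 : ZMod 8) - 0 = 7 := by decide
      rw [e1] at h1; rw [e2] at h2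
      rw [h1, h2, hammingDist_comm]
    have w53 : w 3 = w 5 := by
      have h1 := h 0 5
      have h2 := h 5 0
      have e1 : (0 : ZMod 8) - 5 = 3 := by decide
      have e2 : (5 : ZMod 8) - 0 = 5 := by decide
      rw [e1] at h1; rw [e2] at h2
      rw [h1, h2, hammingDist_comm]
    have hsum2 : w 1 + w 3 = 3 := by omega
    -- parity contradiction: w 1 and w 3 are both odd
    have hw3 : ((w 3 : ℕ) : ZMod 2) = 1 := by
      have := hpar 3 0
      have e : (3 : ZMod 8) - 0 = 3 := by decide
      rw [e, p3] at this
      rw [this]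
      have : ∀ c : ZMod 2, c + 1 + c = 1 := by decide
      exact this _
    have hcast := congrArg (fun n : ℕ => (n : ZMod 2)) hsum2
    simp only [Nat.cast_add] at hcast
    rw [hc, hw3] at hcast
    revert hcast
    decide
end

section
/- The composition of s-1 modular Gray maps η^s_g, η^{s-1}_g, ..., η^2_g yields an isometry from Z_{2^s} with homogeneous weight to Z_2^{2^{s-1}} with Hamming weight: for every u in Z_{2^s}, the Hamming weight of the resulting binary vector of length 2^{s-1} equals w_{HW}(u). -/
/-- Iterated modular Gray map: composing η^s_g, η^{s-1}_g, …, η^2_g coordinatewise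
yields a binary vector (as a list over Z_2) of length 2^{s-1}. -/
def iterGray : (s : ℕ) → ZMod (2^s) → List (ZMod 2)
  | 0, _ => []
  | 1, u => [u]
  | (s+2), u => iterGray (s+1) (etaG (s+2) u).1 ++ iterGray (s+1) (etaG (s+2) u).2

lemma homWt_cast (k n : ℕ) (h : n < 2^(k+2)) :
    homWt (k+2) ((n : ZMod (2^(k+2)))) =
      if n = 0 then 0 else if n = 2^(k+1) then 2^(k+1) else 2^k := by
  have hv : ((n : ZMod (2^(k+2)))).val = n := ZMod.val_cast_of_lt h
  have hz : ((n : ZMod (2^(k+2))) = 0) ↔ n = 0 := by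
    rw [← ZMod.val_eq_zero, hv]
  unfold homWt
  simp only [show k+2-1 = k+1 from rfl, show k+2-2 = k from rfl, hv]
  by_cases h0 : n = 0 <;> simp [h0, hz]

lemma etaG_homWt_key (k : ℕ) (u : ZMod (2^(k+3))) :
    homWt (k+2) (etaG (k+3) u).1 + homWt (k+2) (etaG (k+3) u).2 = homWt (k+3) u := by
  have hi : u.val < 2^(k+3) := ZMod.val_lt u
  have p1 : (2:ℕ)^(k+1) = 2*2^k := by ring
  have p2 : (2:ℕ)^(k+2) = 4*2^k := by ring
  have p3 : (2:ℕ)^(k+3) = 8*2^k := by ring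
  have hP : (0:ℕ) < 2^k := Nat.pow_pos (by norm_num)
  have hw : homWt (k+3) u =
      if u.val = 0 then 0 else if u.val = 2^(k+2) then 2^(k+2) else 2^(k+1) := by
    unfold homWt
    simp only [show k+3-1 = k+2 from rfl, show k+3-2 = k+1 from rfl, ← ZMod.val_eq_zero u]
  unfold etaG
  simp only [show k+3-1 = k+2 from rfl, show k+3-2 = k+1 from rfl]
  split_ifs with h1 h2 h3 <;>
    · dsimp only
      rw [hw, homWt_cast _ _ (by omega)]
      try rw [homWt_cast _ _ (by omega)]
      split_ifs <;> omega

theorem iterGray_hamming (s : ℕ) (hs : 2 ≤ s) (u : ZMod (2^s)) :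
    (iterGray s u).length = 2^(s-1) ∧
    (iterGray s u).countP (fun x => decide (x ≠ 0)) = homWt s u := by
  obtain ⟨k, rfl⟩ : ∃ k, s = k + 2 := ⟨s - 2, by omega⟩
  clear hs
  induction k with
  | zero => revert u; decide
  | succ n ih =>
    have hdef : iterGray (n+3) u =
        iterGray (n+2) (etaG (n+3) u).1 ++ iterGray (n+2) (etaG (n+3) u).2 := rfl
    obtain ⟨l1, c1⟩ := ih (etaG (n+3) u).1
    obtain ⟨l2, c2⟩ := ih (etaG (n+3) u).2
    constructor
    · show (iterGray (n+3) u).length = 2^(n+2)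
      rw [hdef, List.length_append, l1, l2]
      simp only [show n+2-1 = n+1 from rfl]
      ring
    · show (iterGray (n+3) u).countP _ = homWt (n+3) u
      rw [hdef, List.countP_append, c1, c2]
      exact etaG_homWt_key n u
end
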